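/- If Z is a nonvanishing, positive, twice continuously differentiable solution of -Z'' + V(x)Z - 1/(4Z³) = 0 on (a,b), then for any fixed c ∈ (a,b), the functions φ^±(x) := Z(x)·exp(± ∫_c^x 1/(2Z(t)²) dt) are two linearly independent solutions of -u'' + V(x)u = 0 on (a,b). -/

import Mathlib

open Set MeasureTheory intervalIntegral

private lemma bohl_aux
    (V Z : ℝ → ℝ) (a b c : ℝ) (hc : c ∈ Set.Ioo a b)
    (hZpos : ∀ x ∈ Set.Ioo a b, 0 < Z x)
    (hZC2 : ContDiffOn ℝ 2 Z (Set.Ioo a b))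
    (hZode : ∀ x ∈ Set.Ioo a b,
      -(deriv (deriv Z) x) + V x * Z x - 1 / (4 * (Z x) ^ 3) = 0)
    (s : ℝ) (hs : s = 1 ∨ s = -1) (φ : ℝ → ℝ)
    (hφ : ∀ x, φ x = Z x * Real.exp (s * ∫ t in c..x, 1 / (2 * (Z t) ^ 2))) :
    ∀ x ∈ Set.Ioo a b,
      (HasDerivAt φ ((deriv Z x + s / (2 * Z x)) *
        Real.exp (s * ∫ t in c..x, 1 / (2 * (Z t) ^ 2))) x) ∧
      -(deriv (deriv φ) x) + V x * φ x = 0 := by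
  set I := Set.Ioo a b with hIdef
  have hIopen : IsOpen I := isOpen_Ioo
  set f : ℝ → ℝ := fun t => 1 / (2 * (Z t) ^ 2) with hfdef
  set W : ℝ → ℝ := fun x => ∫ t in c..x, f t with hWdef
  have hZcont : ContinuousOn Z I := hZC2.continuousOn
  have hfcont : ContinuousOn f I := by
    apply continuousOn_const.div (continuousOn_const.mul (hZcont.pow 2))
    intro x hx
    have := hZpos x hx
    show (2:ℝ) * Z x ^ 2 ≠ 0
    positivity
  have hW : ∀ x ∈ I, HasDerivAt W (f x) x := by
    intro x hx
    have huIcc : Set.uIcc c x ⊆ I := (Set.ordConnected_Ioo).uIcc_subset hc hx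
    exact integral_hasDerivAt_right
      ((hfcont.mono huIcc).intervalIntegrable)
      (hfcont.stronglyMeasurableAtFilter hIopen x hx)
      (hfcont.continuousAt (hIopen.mem_nhds hx))
  have hZd : ∀ x ∈ I, HasDerivAt Z (deriv Z x) x := fun x hx =>
    ((hZC2.differentiableOn (by norm_num)).differentiableAt
      (hIopen.mem_nhds hx)).hasDerivAt
  have hZ1 : ContDiffOn ℝ 1 (deriv Z) I := by
    have := hZC2.deriv_of_isOpen hIopen (m := 1) (by norm_num)
    simpa using this
  have hZdd : ∀ x ∈ I, HasDerivAt (deriv Z) (deriv (deriv Z) x) x := fun x hx =>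
    ((hZ1.differentiableOn (by norm_num)).differentiableAt
      (hIopen.mem_nhds hx)).hasDerivAt
  have hφeq : φ = fun x => Z x * Real.exp (s * W x) := by
    funext x
    rw [hφ x]
  -- first derivative of φ
  have hφd : ∀ x ∈ I, HasDerivAt φ ((deriv Z x + s / (2 * Z x)) * Real.exp (s * W x)) x := by
    intro x hx
    have hZne : Z x ≠ 0 := ne_of_gt (hZpos x hx)
    have h1 : HasDerivAt (fun y => Real.exp (s * W y)) (Real.exp (s * W x) * (s * f x)) x :=
      (((hW x hx).const_mul s).exp)
    have h2 := (hZd x hx).mul h1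
    rw [hφeq]
    refine h2.congr_deriv ?_
    simp only [f]
    field_simp
  -- second derivative and ODE
  intro x hx
  refine ⟨hφd x hx, ?_⟩
  have hZne : Z x ≠ 0 := ne_of_gt (hZpos x hx)
  set g : ℝ → ℝ := fun y => (deriv Z y + s / (2 * Z y)) * Real.exp (s * W y) with hgdef
  have hgd : HasDerivAt g
      ((deriv (deriv Z) x + (0 * (2 * Z x) - s * (2 * deriv Z x)) / (2 * Z x) ^ 2) *
        Real.exp (s * W x) +
       (deriv Z x + s / (2 * Z x)) * (Real.exp (s * W x) * (s * f x))) x := by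
    have hne : 2 * Z x ≠ 0 := by positivity
    have h1 : HasDerivAt (fun y => s / (2 * Z y))
        ((0 * (2 * Z x) - s * (2 * deriv Z x)) / (2 * Z x) ^ 2) x :=
      (hasDerivAt_const x s).div ((hZd x hx).const_mul 2) hne
    exact ((hZdd x hx).add h1).mul (((hW x hx).const_mul s).exp)
  have hderiv_eq : deriv (deriv φ) x = deriv g x := by
    apply Filter.EventuallyEq.deriv_eq
    filter_upwards [hIopen.mem_nhds hx] with y hy
    exact (hφd y hy).deriv
  have hφx : φ x = Z x * Real.exp (s * W x) := by rw [hφeq]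
  rw [hderiv_eq, hgd.deriv, hφx]
  have hZ'' : deriv (deriv Z) x = V x * Z x - 1 / (4 * (Z x) ^ 3) := by
    have := hZode x hx; linarith
  rw [hZ'']
  simp only [hfdef]
  have hexp : Real.exp (s * W x) ≠ 0 := Real.exp_ne_zero _
  rcases hs with rfl | rfl <;> field_simp <;> ring

theorem bohl_solutions_independent
    (V Z : ℝ → ℝ) (a b c : ℝ) (hc : c ∈ Set.Ioo a b)
    (hV : ContinuousOn V (Set.Ioo a b))
    (hZpos : ∀ x ∈ Set.Ioo a b, 0 < Z x)
    (hZC2 : ContDiffOn ℝ 2 Z (Set.Ioo a b))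
    (hZode : ∀ x ∈ Set.Ioo a b,
      -(deriv (deriv Z) x) + V x * Z x - 1 / (4 * (Z x) ^ 3) = 0)
    (φp φm : ℝ → ℝ)
    (hφp : ∀ x, φp x = Z x * Real.exp (∫ t in c..x, 1 / (2 * (Z t) ^ 2)))
    (hφm : ∀ x, φm x = Z x * Real.exp (-∫ t in c..x, 1 / (2 * (Z t) ^ 2))) :
    (∀ x ∈ Set.Ioo a b, -(deriv (deriv φp) x) + V x * φp x = 0) ∧
    (∀ x ∈ Set.Ioo a b, -(deriv (deriv φm) x) + V x * φm x = 0) ∧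
    (∀ α β : ℝ, (∀ x ∈ Set.Ioo a b, α * φp x + β * φm x = 0) → α = 0 ∧ β = 0) := by
  have hp := bohl_aux V Z a b c hc hZpos hZC2 hZode 1 (Or.inl rfl) φp
    (by intro x; rw [hφp x, one_mul])
  have hm := bohl_aux V Z a b c hc hZpos hZC2 hZode (-1) (Or.inr rfl) φm
    (by intro x; rw [hφm x, neg_one_mul])
  refine ⟨fun x hx => (hp x hx).2, fun x hx => (hm x hx).2, ?_⟩
  intro α β h
  have hZc : 0 < Z c := hZpos c hc
  have hint0 : (∫ t in (c)..(c), 1 / (2 * (Z t) ^ 2)) = 0 := intervalIntegral.integral_same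
  have hφpc : φp c = Z c := by rw [hφp c, hint0]; simp
  have hφmc : φm c = Z c := by rw [hφm c, hint0]; simp
  have h0 : (α + β) * Z c = 0 := by
    have := h c hc
    rw [hφpc, hφmc] at this
    linarith [this]
  have hab : α + β = 0 := by
    rcases mul_eq_zero.mp h0 with h' | h'
    · exact h'
    · exact absurd h' (ne_of_gt hZc)
  set D1 := (deriv Z c + 1 / (2 * Z c)) *
      Real.exp (1 * ∫ t in c..c, 1 / (2 * (Z t) ^ 2)) with hD1
  set D2 := (deriv Z c + (-1) / (2 * Z c)) *
      Real.exp ((-1) * ∫ t in c..c, 1 / (2 * (Z t) ^ 2)) with hD2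
  have hFd : HasDerivAt (fun x => α * φp x + β * φm x) (α * D1 + β * D2) c :=
    (((hp c hc).1).const_mul α).add (((hm c hc).1).const_mul β)
  have hF0 : deriv (fun x => α * φp x + β * φm x) c = 0 := by
    have hev : (fun x => α * φp x + β * φm x) =ᶠ[nhds c] (fun _ => (0:ℝ)) := by
      filter_upwards [isOpen_Ioo.mem_nhds hc] with y hy
      exact h y hy
    rw [hev.deriv_eq]; simp
  have hd0 : α * D1 + β * D2 = 0 := by rw [← hFd.deriv]; exact hF0
  rw [hD1, hD2, hint0] at hd0
  simp only [mul_zero, Real.exp_zero, mul_one] at hd0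
  have hβ : β = -α := by linarith
  rw [hβ] at hd0
  have hZne : Z c ≠ 0 := ne_of_gt hZc
  have hα : α = 0 := by
    have hkey : α * (1 / Z c) = 0 := by
      field_simp at hd0 ⊢
      linarith
    rcases mul_eq_zero.mp hkey with h' | h'
    · exact h'
    · exact absurd h' (by positivity)
  exact ⟨hα, by rw [hβ, hα, neg_zero]⟩
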